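/- The squared norm of the ridge estimator is non-increasing in the regularization parameter: for fixed Z ∈ ℝ^{n×p} and y ∈ ℝⁿ, the map λ ↦ ‖(ZᵀZ + λI)⁻¹Zᵀy‖² has derivative −2 yᵀZ(ZᵀZ + λI)⁻³Zᵀy ≤ 0 for all λ > 0; in particular it is monotone non-increasing on (0, ∞). -/

import Mathlib

open Matrix

attribute [local instance] Matrix.linftyOpNormedRing Matrix.linftyOpNormedAlgebra
  Matrix.linftyOpNormedSpace

namespace RidgeAux

variable {n p : ℕ}

/-- Entry extraction as a linear map. -/
def entryLM (i j : Fin p) : Matrix (Fin p) (Fin p) ℝ →ₗ[ℝ] ℝ where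
  toFun M := M i j
  map_add' := fun _ _ => rfl
  map_smul' := fun _ _ => rfl

lemma posDef_A (Z : Matrix (Fin n) (Fin p) ℝ) {lam : ℝ} (hl : 0 < lam) :
    (Zᵀ * Z + lam • (1 : Matrix (Fin p) (Fin p) ℝ)).PosDef := by
  refine Matrix.PosDef.posSemidef_add ?_ ?_
  · simpa using Matrix.posSemidef_conjTranspose_mul_self Z
  · refine Matrix.posDef_iff_dotProduct_mulVec.mpr ⟨?_, ?_⟩
    · unfold Matrix.IsHermitian
      simp
    · intro x hx
      have h1 : star x ⬝ᵥ ((lam • (1 : Matrix (Fin p) (Fin p) ℝ)) *ᵥ x)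
          = lam * (x ⬝ᵥ x) := by
        simp [Matrix.smul_mulVec, Matrix.one_mulVec, dotProduct_smul]
      rw [h1]
      have h0 : x ⬝ᵥ x ≠ 0 := fun h => hx (dotProduct_self_eq_zero.mp h)
      have hnn : 0 ≤ x ⬝ᵥ x := Finset.sum_nonneg fun i _ => mul_self_nonneg (x i)
      exact mul_pos hl (lt_of_le_of_ne hnn (Ne.symm h0))

/-- Derivative of the inverse of `ZᵀZ + t•1` in the matrix normed ring. -/
lemma hasDerivAt_inv (Z : Matrix (Fin n) (Fin p) ℝ) {lam : ℝ} (hl : 0 < lam) :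
    HasDerivAt (fun t : ℝ => (Zᵀ * Z + t • (1 : Matrix (Fin p) (Fin p) ℝ))⁻¹)
      (-((Zᵀ * Z + lam • 1)⁻¹ * (Zᵀ * Z + lam • 1)⁻¹)) lam := by
  set A : ℝ → Matrix (Fin p) (Fin p) ℝ := fun t => Zᵀ * Z + t • 1 with hAdef
  have hA : HasDerivAt A (1 : Matrix (Fin p) (Fin p) ℝ) lam := by
    have := ((hasDerivAt_id lam).smul_const (1 : Matrix (Fin p) (Fin p) ℝ)).const_add (Zᵀ * Z)
    exact this.congr_deriv (one_smul _ _)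
  obtain ⟨u, hu⟩ := (posDef_A Z hl).isUnit
  have hu' : (↑u : Matrix (Fin p) (Fin p) ℝ) = A lam := hu
  have hinv : HasFDerivAt Ring.inverse
      (-ContinuousLinearMap.mulLeftRight ℝ _ (↑u⁻¹) ↑u⁻¹) (A lam) := by
    rw [← hu']
    exact hasFDerivAt_ringInverse u
  have hcomp := hinv.comp_hasDerivAt lam hA
  have huinv : (↑u⁻¹ : Matrix (Fin p) (Fin p) ℝ) = (A lam)⁻¹ := by
    rw [Matrix.nonsing_inv_eq_ringInverse, ← hu', Ring.inverse_unit]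
  have heq : (fun t : ℝ => Ring.inverse (A t)) = fun t => (A t)⁻¹ := by
    funext t
    rw [Matrix.nonsing_inv_eq_ringInverse]
  rw [Function.comp_def, heq] at hcomp
  refine hcomp.congr_deriv ?_
  simp [huinv, A]

lemma transpose_inv_eq (Z : Matrix (Fin n) (Fin p) ℝ) {lam : ℝ} (hl : 0 < lam) :
    ((Zᵀ * Z + lam • (1 : Matrix (Fin p) (Fin p) ℝ))⁻¹)ᵀ
      = (Zᵀ * Z + lam • (1 : Matrix (Fin p) (Fin p) ℝ))⁻¹ := by
  have h := (posDef_A Z hl).inv.isHermitian.eq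
  rwa [Matrix.conjTranspose_eq_transpose_of_trivial] at h

lemma inner_eq (Z : Matrix (Fin n) (Fin p) ℝ) (y : Fin n → ℝ) {lam : ℝ} (hl : 0 < lam) :
    y ⬝ᵥ (Z *ᵥ (((Zᵀ * Z + lam • 1)⁻¹ * (Zᵀ * Z + lam • 1)⁻¹ *
        (Zᵀ * Z + lam • 1)⁻¹) *ᵥ (Zᵀ *ᵥ y)))
      = ((Zᵀ * Z + lam • 1)⁻¹ *ᵥ ((Zᵀ * Z + lam • 1)⁻¹ *ᵥ (Zᵀ *ᵥ y))) ⬝ᵥ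
        ((Zᵀ * Z + lam • 1)⁻¹ *ᵥ (Zᵀ *ᵥ y)) := by
  set B := (Zᵀ * Z + lam • (1 : Matrix (Fin p) (Fin p) ℝ))⁻¹ with hB
  set b := Zᵀ *ᵥ y with hb
  have h1 : y ⬝ᵥ (Z *ᵥ ((B * B * B) *ᵥ b)) = b ⬝ᵥ ((B * B * B) *ᵥ b) := by
    rw [Matrix.dotProduct_mulVec, hb, Matrix.mulVec_transpose]
  have ht : Bᵀ = B := transpose_inv_eq Z hl
  rw [h1, ← Matrix.mulVec_mulVec, Matrix.dotProduct_mulVec, ← Matrix.mulVec_transpose,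
    Matrix.transpose_mul, ht, Matrix.mulVec_mulVec b B B]

lemma inner_nonneg (Z : Matrix (Fin n) (Fin p) ℝ) (y : Fin n → ℝ) {lam : ℝ} (hl : 0 < lam) :
    0 ≤ y ⬝ᵥ (Z *ᵥ (((Zᵀ * Z + lam • 1)⁻¹ * (Zᵀ * Z + lam • 1)⁻¹ *
        (Zᵀ * Z + lam • 1)⁻¹) *ᵥ (Zᵀ *ᵥ y))) := by
  rw [inner_eq Z y hl]
  have h := ((posDef_A Z hl).inv.posSemidef).dotProduct_mulVec_nonneg ((Zᵀ * Z + lam • 1)⁻¹ *ᵥ (Zᵀ *ᵥ y))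
  simpa [dotProduct_comm] using h

/-- The main derivative computation. -/
lemma key (Z : Matrix (Fin n) (Fin p) ℝ) (y : Fin n → ℝ) {lam : ℝ} (hl : 0 < lam) :
    HasDerivAt
        (fun t : ℝ => ∑ i,
          ((Zᵀ * Z + t • (1 : Matrix (Fin p) (Fin p) ℝ))⁻¹ *ᵥ (Zᵀ *ᵥ y)) i ^ 2)
        (-2 * (y ⬝ᵥ (Z *ᵥ (((Zᵀ * Z + lam • 1)⁻¹ * (Zᵀ * Z + lam • 1)⁻¹ *
          (Zᵀ * Z + lam • 1)⁻¹) *ᵥ (Zᵀ *ᵥ y))))) lam := by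
  set B := (Zᵀ * Z + lam • (1 : Matrix (Fin p) (Fin p) ℝ))⁻¹ with hB
  set b := Zᵀ *ᵥ y with hb
  have hG := hasDerivAt_inv Z hl
  have hE : ∀ i j : Fin p, HasDerivAt
      (fun t : ℝ => (Zᵀ * Z + t • (1 : Matrix (Fin p) (Fin p) ℝ))⁻¹ i j)
      ((-(B * B)) i j) lam := fun i j =>
    ((entryLM i j).toContinuousLinearMap.hasFDerivAt.comp_hasDerivAt lam hG)
  have hv : ∀ i : Fin p, HasDerivAt
      (fun t : ℝ => ((Zᵀ * Z + t • (1 : Matrix (Fin p) (Fin p) ℝ))⁻¹ *ᵥ b) i)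
      (((-(B * B)) *ᵥ b) i) lam := by
    intro i
    have hs := HasDerivAt.fun_sum (fun j (_ : j ∈ Finset.univ) => (hE i j).mul_const (b j))
    exact hs
  have hsum := HasDerivAt.fun_sum
    (fun i (_ : i ∈ Finset.univ) => HasDerivAt.fun_pow (hv i) 2)
  refine HasDerivAt.congr_deriv hsum (Eq.symm ?_)
  rw [inner_eq Z y hl]
  simp only [pow_one, Nat.cast_ofNat, Matrix.neg_mulVec, Pi.neg_apply]
  rw [dotProduct, ← Matrix.mulVec_mulVec, Finset.mul_sum]
  ring_nf
  congr 1
  funext i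
  rw [Matrix.mulVec_mulVec]
  ring

end RidgeAux

/-- The squared norm of the ridge estimator is non-increasing in the
regularization parameter: its derivative is `-2 yᵀZ(ZᵀZ+λI)⁻³Zᵀy ≤ 0`, and the
map is monotone non-increasing on `(0, ∞)`. -/
theorem ridge_norm_monotone_in_lambda {n p : ℕ}
    (Z : Matrix (Fin n) (Fin p) ℝ) (y : Fin n → ℝ) :
    (∀ lam : ℝ, 0 < lam →
      HasDerivAt
        (fun t : ℝ => ∑ i,
          ((Zᵀ * Z + t • (1 : Matrix (Fin p) (Fin p) ℝ))⁻¹ *ᵥ (Zᵀ *ᵥ y)) i ^ 2)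
        (-2 * (y ⬝ᵥ (Z *ᵥ (((Zᵀ * Z + lam • 1)⁻¹ * (Zᵀ * Z + lam • 1)⁻¹ *
          (Zᵀ * Z + lam • 1)⁻¹) *ᵥ (Zᵀ *ᵥ y))))) lam) ∧
    (∀ lam : ℝ, 0 < lam →
      0 ≤ y ⬝ᵥ (Z *ᵥ (((Zᵀ * Z + lam • 1)⁻¹ * (Zᵀ * Z + lam • 1)⁻¹ *
        (Zᵀ * Z + lam • 1)⁻¹) *ᵥ (Zᵀ *ᵥ y)))) ∧
    AntitoneOn
      (fun t : ℝ => ∑ i,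
        ((Zᵀ * Z + t • (1 : Matrix (Fin p) (Fin p) ℝ))⁻¹ *ᵥ (Zᵀ *ᵥ y)) i ^ 2)
      (Set.Ioi (0 : ℝ)) := by
  refine ⟨fun lam hl => RidgeAux.key Z y hl, fun lam hl => RidgeAux.inner_nonneg Z y hl, ?_⟩
  apply antitoneOn_of_deriv_nonpos (convex_Ioi 0)
  · intro x hx
    exact (RidgeAux.key Z y hx).differentiableAt.continuousAt.continuousWithinAt
  · rw [interior_Ioi]
    intro x hx
    exact (RidgeAux.key Z y hx).differentiableAt.differentiableWithinAt
  · rw [interior_Ioi]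
    intro x hx
    rw [(RidgeAux.key Z y hx).deriv]
    have h := RidgeAux.inner_nonneg Z y hx
    nlinarith
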